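/- arXiv:2504.00553 — 2 statements merged into one kernel-verified Lean document; each statement's English description precedes it below -/
import Mathlib

section
/- For all integers k, ℓ ≥ 4 and positive integers n, m: the wheel W_k = K_1 ∨ C_{k−1} satisfies S_b(W_k) = S_b(C_{k−1}) + 1; the fan F_ℓ = K_1 ∨ P_{ℓ−1} satisfies S_b(F_ℓ) = S_b(P_{ℓ−1}) + 1; and the complete split graph K_n ∨ K̄_m (the join of a complete graph on n vertices with an edgeless graph on m vertices) satisfies S_b(K_n ∨ K̄_m) = n + 1. -/
/-!
Definitions for star colorings, star recoloring steps, the strict partial order `≺ₛ`,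
star b-vertices, the star (b-)chromatic number, star degrees and related notions,
following Božović, Mesarič Štesl, Peterin,
"On star b-chromatic number of a graph".
-/

variable {V : Type*}

/-- A proper coloring which is a *star coloring*: no path on four vertices
(vertices `a-b-x-y` with the three edges `ab`, `bx`, `xy`) is bicolored,
i.e. the union of any two color classes induces a star forest. -/
def IsStarColoring (G : SimpleGraph V) (c : V → ℕ) : Prop :=
  (∀ ⦃u w⦄, G.Adj u w → c u ≠ c w) ∧
  ∀ a b x y : V, G.Adj a b → G.Adj b x → G.Adj x y →
    a ≠ x → b ≠ y → a ≠ y → ¬(c a = c x ∧ c b = c y)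

/-- The set of colors used by a coloring. -/
def colorsUsed [Fintype V] (c : V → ℕ) : Finset ℕ :=
  Finset.image c Finset.univ

/-- `c'` is obtained from `c` by a *star recoloring step*: some color class `Vᵢ`
of the star coloring `c` is completely recolored, each of its vertices receiving one
of the remaining colors of `c`, so that the result `c'` is again a star coloring
(using the colors of `c` minus `i`). We write `c' ⊲ₛ c`. -/
def StarRecolorStep [Fintype V] (G : SimpleGraph V) (c' c : V → ℕ) : Prop :=
  IsStarColoring G c ∧ IsStarColoring G c' ∧
  ∃ i ∈ colorsUsed c,
    (∀ v, c v ≠ i → c' v = c v) ∧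
    ∀ v, c v = i → c' v ≠ i ∧ c' v ∈ colorsUsed c

/-- A minimal element of the strict partial order `≺ₛ` (the transitive closure of
the star recoloring step relation `⊲ₛ`): a star coloring on which no star
recoloring step can be performed. -/
def IsStarBColoring [Fintype V] (G : SimpleGraph V) (c : V → ℕ) : Prop :=
  IsStarColoring G c ∧ ∀ c', ¬ StarRecolorStep G c' c

/-- The *star b-chromatic number* `Sᵦ(G)`: the maximum number of colors used by a
minimal element of `≺ₛ`. -/
noncomputable def starBChromaticNumber [Fintype V] (G : SimpleGraph V) : ℕ :=
  sSup {n | ∃ c : V → ℕ, IsStarBColoring G c ∧ (colorsUsed c).card = n}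

/-- The *star chromatic number* `S(G)`: the minimum number of colors in a star coloring. -/
noncomputable def starChromaticNumber [Fintype V] (G : SimpleGraph V) : ℕ :=
  sInf {n | ∃ c : V → ℕ, IsStarColoring G c ∧ (colorsUsed c).card = n}

/-- A color `j` is *blocked* for the vertex `v` under the star coloring `c`
if `j` is the color of `v` itself, or recoloring `v` alone with `j` destroys
the star coloring property. -/
def ColorBlockedFor [DecidableEq V] (G : SimpleGraph V) (c : V → ℕ) (v : V) (j : ℕ) : Prop :=
  j = c v ∨ ¬ IsStarColoring G (Function.update c v j)

/-- A color of `c` which is not blocked for `v` is *available* for `v`. -/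
def ColorAvailableFor [Fintype V] [DecidableEq V] (G : SimpleGraph V) (c : V → ℕ)
    (v : V) (j : ℕ) : Prop :=
  j ∈ colorsUsed c ∧ ¬ ColorBlockedFor G c v j

/-- `u-b-x-w` is an induced path on four vertices of `G`. -/
def IsInducedP4 (G : SimpleGraph V) (u b x w : V) : Prop :=
  G.Adj u b ∧ G.Adj b x ∧ G.Adj x w ∧
  ¬ G.Adj u x ∧ ¬ G.Adj b w ∧ ¬ G.Adj u w ∧
  u ≠ x ∧ b ≠ w ∧ u ≠ w

/-- The relation `~ᵢ` on a color class: two vertices of the same color joined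
by an induced path on four vertices. -/
def P4Rel (G : SimpleGraph V) (c : V → ℕ) (u w : V) : Prop :=
  c u = c w ∧ ∃ b x, IsInducedP4 G u b x w

/-- The `P₄`-system of `v`: its equivalence class under the
reflexive-transitive closure of `~ᵢ`. -/
def P4System (G : SimpleGraph V) (c : V → ℕ) (v : V) : Set V :=
  {u | Relation.ReflTransGen (P4Rel G c) v u}

/-- An available color `j` for `v` is *blocked for the `P₄`-system of `v`* if every
recoloring of the color class of `v` (each vertex receiving an available color)
in which `v` is recolored by `j` yields a bicolored path on four vertices between
two vertices of the `P₄`-system of `v`. -/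
def BlockedForP4System [Fintype V] [DecidableEq V] (G : SimpleGraph V) (c : V → ℕ)
    (v : V) (j : ℕ) : Prop :=
  ∀ c' : V → ℕ,
    (∀ u, c u ≠ c v → c' u = c u) →
    (∀ u, c u = c v → ColorAvailableFor G c u (c' u)) →
    c' v = j →
    ∃ u w b x, u ∈ P4System G c v ∧ w ∈ P4System G c v ∧
      G.Adj u b ∧ G.Adj b x ∧ G.Adj x w ∧ u ≠ x ∧ b ≠ w ∧ u ≠ w ∧
      c' u = c' x ∧ c' b = c' w

/-- A *star b-vertex*: every available color for `v` is blocked for its `P₄`-system. -/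
def IsStarBVertex [Fintype V] [DecidableEq V] (G : SimpleGraph V) (c : V → ℕ) (v : V) : Prop :=
  ∀ j, ColorAvailableFor G c v j → BlockedForP4System G c v j

/-- The *star degree* `dˢ_G(v)` of a vertex: the maximum number of colors blocked
for `v` over all star colorings of `G`. -/
noncomputable def starDegree [Fintype V] [DecidableEq V] (G : SimpleGraph V) (v : V) : ℕ :=
  sSup {n | ∃ c : V → ℕ, IsStarColoring G c ∧
    {j | j ∈ colorsUsed c ∧ ColorBlockedFor G c v j}.ncard = n}

/-- The `mₛ`-degree of a graph: the largest `k` such that `G` has `k` vertices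
of star degree at least `k - 1` (equivalently, with the vertices ordered by
non-increasing star degree, `mₛ(G) = max {i : i - 1 ≤ dˢ_G(vᵢ)}`). -/
noncomputable def msDegree [Fintype V] [DecidableEq V] (G : SimpleGraph V) : ℕ :=
  sSup {k | ∃ s : Finset V, s.card = k ∧ ∀ v ∈ s, k - 1 ≤ starDegree G v}

/-- The maximum degree `Δ(G)` of a graph. -/
noncomputable def maxDeg (G : SimpleGraph V) : ℕ :=
  sSup {d | ∃ v : V, (G.neighborSet v).ncard = d}

/-- The *b-chromatic number* `φ(G)`: the maximum number of colors of a proper coloring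
in which every color class contains a vertex whose closed neighborhood contains
all the colors. -/
noncomputable def bChromaticNumber [Fintype V] (G : SimpleGraph V) : ℕ :=
  sSup {k | ∃ c : V → ℕ, (∀ ⦃u w⦄, G.Adj u w → c u ≠ c w) ∧ (colorsUsed c).card = k ∧
    ∀ i ∈ colorsUsed c, ∃ v, c v = i ∧
      ∀ j ∈ colorsUsed c, ∃ u, (u = v ∨ G.Adj v u) ∧ c u = j}

/-- The join `G ∨ H` of two simple graphs: disjoint union of `G` and `H`
together with all edges between the two vertex sets. -/
def graphJoin {α β : Type*} (G : SimpleGraph α) (H : SimpleGraph β) :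
    SimpleGraph (α ⊕ β) where
  Adj x y :=
    (∃ a b, x = Sum.inl a ∧ y = Sum.inl b ∧ G.Adj a b) ∨
    (∃ a b, x = Sum.inr a ∧ y = Sum.inr b ∧ H.Adj a b) ∨
    (∃ a b, x = Sum.inl a ∧ y = Sum.inr b) ∨
    (∃ a b, x = Sum.inr a ∧ y = Sum.inl b)
  symm := by
    constructor
    rintro x y (⟨a,b,rfl,rfl,h⟩|⟨a,b,rfl,rfl,h⟩|⟨a,b,rfl,rfl⟩|⟨a,b,rfl,rfl⟩)
    · exact Or.inl ⟨b, a, rfl, rfl, h.symm⟩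
    · exact Or.inr (Or.inl ⟨b, a, rfl, rfl, h.symm⟩)
    · exact Or.inr (Or.inr (Or.inr ⟨b, a, rfl, rfl⟩))
    · exact Or.inr (Or.inr (Or.inl ⟨b, a, rfl, rfl⟩))
  loopless := by
    constructor
    rintro x (⟨a,b,h1,h2,h⟩|⟨a,b,h1,h2,h⟩|⟨a,b,h1,h2⟩|⟨a,b,h1,h2⟩) <;> subst h1 <;>
      simp_all [SimpleGraph.irrefl]

/-- `N₂(v)`: vertices at distance exactly two from `v`. -/
def distTwoSet (G : SimpleGraph V) (v : V) : Set V := {u | G.dist v u = 2}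

/-- `N₃(v)`: vertices at distance exactly three from `v`. -/
def distThreeSet (G : SimpleGraph V) (v : V) : Set V := {u | G.dist v u = 3}

/-- `X(v)`: vertices at distance two from `v` with no neighbor at distance three from `v`. -/
def XSet (G : SimpleGraph V) (v : V) : Set V :=
  {u | u ∈ distTwoSet G v ∧ ∀ w ∈ distThreeSet G v, ¬ G.Adj u w}

/-- `Y(v)`: vertices at distance two from `v` having a neighbor at distance three from `v`. -/
def YSet (G : SimpleGraph V) (v : V) : Set V := distTwoSet G v \ XSet G v


/-! ### Auxiliary lemmas -/

open Sum

section Aux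

variable {α β : Type*}

lemma graphJoin_adj_inl_inl {G : SimpleGraph α} {H : SimpleGraph β} {a b : α} :
    (graphJoin G H).Adj (inl a) (inl b) ↔ G.Adj a b := by
  constructor
  · rintro (⟨x,y,hx,hy,h⟩|⟨x,y,hx,hy,h⟩|⟨x,y,hx,hy⟩|⟨x,y,hx,hy⟩) <;> simp_all
  · intro h; exact Or.inl ⟨a, b, rfl, rfl, h⟩

lemma graphJoin_adj_inr_inr {G : SimpleGraph α} {H : SimpleGraph β} {a b : β} :
    (graphJoin G H).Adj (inr a) (inr b) ↔ H.Adj a b := by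
  constructor
  · rintro (⟨x,y,hx,hy,h⟩|⟨x,y,hx,hy,h⟩|⟨x,y,hx,hy⟩|⟨x,y,hx,hy⟩) <;> simp_all
  · intro h; exact Or.inr (Or.inl ⟨a, b, rfl, rfl, h⟩)

lemma graphJoin_adj_inl_inr {G : SimpleGraph α} {H : SimpleGraph β} (a : α) (b : β) :
    (graphJoin G H).Adj (inl a) (inr b) :=
  Or.inr (Or.inr (Or.inl ⟨a, b, rfl, rfl⟩))

lemma graphJoin_adj_inr_inl {G : SimpleGraph α} {H : SimpleGraph β} (a : β) (b : α) :
    (graphJoin G H).Adj (inr a) (inl b) :=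
  Or.inr (Or.inr (Or.inr ⟨a, b, rfl, rfl⟩))

lemma top_fin_one_not_adj (a b : Fin 1) : ¬ (⊤ : SimpleGraph (Fin 1)).Adj a b := by
  simp [Subsingleton.elim a b]

lemma mem_colorsUsed [Fintype V] {c : V → ℕ} {j : ℕ} :
    j ∈ colorsUsed c ↔ ∃ v, c v = j := by
  simp [colorsUsed]

lemma colorsUsed_card_le [Fintype V] (c : V → ℕ) :
    (colorsUsed c).card ≤ Fintype.card V := by
  classical
  simpa [colorsUsed] using Finset.card_image_le (s := (Finset.univ : Finset V)) (f := c)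

/-- Any finite graph has a star coloring (an injective coloring). -/
lemma exists_isStarColoring [Fintype V] (G : SimpleGraph V) : ∃ c, IsStarColoring G c := by
  classical
  obtain ⟨f, hf⟩ : ∃ f : V → ℕ, Function.Injective f := by
    refine ⟨fun v => (Fintype.equivFin V v : ℕ), fun a b h => ?_⟩
    exact (Fintype.equivFin V).injective (Fin.val_injective h)
  refine ⟨f, fun u w huw => fun h => G.ne_of_adj huw (hf h), ?_⟩
  intro a b x y _ _ _ hax _ _ h
  exact hax (hf h.1)

lemma StarRecolorStep.card_lt [Fintype V] {G : SimpleGraph V} {c' c : V → ℕ}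
    (h : StarRecolorStep G c' c) : (colorsUsed c').card < (colorsUsed c).card := by
  classical
  obtain ⟨_, _, i, hi, hkeep, hchg⟩ := h
  have hsub : colorsUsed c' ⊆ (colorsUsed c).erase i := by
    intro j hj
    obtain ⟨v, hv⟩ := mem_colorsUsed.mp hj
    by_cases hvi : c v = i
    · obtain ⟨h1, h2⟩ := hchg v hvi
      exact Finset.mem_erase.mpr ⟨hv ▸ h1, hv ▸ h2⟩
    · rw [← hv, hkeep v hvi]
      exact Finset.mem_erase.mpr ⟨hvi, mem_colorsUsed.mpr ⟨v, rfl⟩⟩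
  calc (colorsUsed c').card ≤ ((colorsUsed c).erase i).card := Finset.card_le_card hsub
    _ < (colorsUsed c).card := Finset.card_erase_lt_of_mem hi

/-- Every finite graph admits a star b-coloring. -/
lemma exists_isStarBColoring [Fintype V] (G : SimpleGraph V) : ∃ c, IsStarBColoring G c := by
  classical
  obtain ⟨c, hc⟩ := exists_isStarColoring G
  -- strong induction on the number of colors used
  have key : ∀ N, ∀ c : V → ℕ, IsStarColoring G c → (colorsUsed c).card ≤ N →
      ∃ c₀, IsStarBColoring G c₀ := by
    intro N
    induction N with
    | zero =>
        intro c hc hcard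
        refine ⟨c, hc, fun c' hc' => ?_⟩
        have := hc'.card_lt
        omega
    | succ N ih =>
        intro c hc hcard
        by_cases hstep : ∃ c', StarRecolorStep G c' c
        · obtain ⟨c', hc'⟩ := hstep
          have hlt := hc'.card_lt
          exact ih c' hc'.2.1 (by omega)
        · exact ⟨c, hc, fun c' hc' => hstep ⟨c', hc'⟩⟩
  exact key _ c hc le_rfl

section JoinOne

variable [Fintype β] {H : SimpleGraph β}

lemma colorsUsed_sum (c : Fin 1 ⊕ β → ℕ) :
    colorsUsed c = insert (c (inl 0)) (colorsUsed (c ∘ inr)) := by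
  classical
  ext j
  simp only [mem_colorsUsed, Finset.mem_insert]
  constructor
  · rintro ⟨v | v, rfl⟩
    · left; rw [Subsingleton.elim (0 : Fin 1) v]
    · right; exact ⟨v, rfl⟩
  · rintro (rfl | hj)
    · exact ⟨inl 0, rfl⟩
    · obtain ⟨v, hv⟩ := hj
      exact ⟨inr v, hv⟩

lemma isStarColoring_join_iff (c : Fin 1 ⊕ β → ℕ) :
    IsStarColoring (graphJoin (⊤ : SimpleGraph (Fin 1)) H) c ↔
      IsStarColoring H (c ∘ inr) ∧ ∀ b, c (inr b) ≠ c (inl 0) := by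
  constructor
  · rintro ⟨hp, hs⟩
    refine ⟨⟨fun u w huw => hp (graphJoin_adj_inr_inr.mpr huw), ?_⟩, ?_⟩
    · intro a b x y h1 h2 h3 hax hby hay
      exact hs (inr a) (inr b) (inr x) (inr y) (graphJoin_adj_inr_inr.mpr h1)
        (graphJoin_adj_inr_inr.mpr h2) (graphJoin_adj_inr_inr.mpr h3)
        (fun h => hax (inr_injective h)) (fun h => hby (inr_injective h))
        (fun h => hay (inr_injective h))
    · intro b
      exact hp (graphJoin_adj_inr_inl b 0)
  · rintro ⟨⟨hHp, hHs⟩, hub⟩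
    constructor
    · rintro (u | u) (w | w) h
      · exact absurd (graphJoin_adj_inl_inl.mp h) (top_fin_one_not_adj u w)
      · rw [Subsingleton.elim u (0 : Fin 1)]; exact fun hh => hub w hh.symm
      · rw [Subsingleton.elim w (0 : Fin 1)]; exact hub u
      · exact hHp (graphJoin_adj_inr_inr.mp h)
    · rintro (a | a) (b | b) (x | x) (y | y) h1 h2 h3 hax hby hay
      -- kill all cases with an inl-inl adjacency
      all_goals try exact absurd (graphJoin_adj_inl_inl.mp h1) (top_fin_one_not_adj _ _)
      all_goals try exact absurd (graphJoin_adj_inl_inl.mp h2) (top_fin_one_not_adj _ _)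
      all_goals try exact absurd (graphJoin_adj_inl_inl.mp h3) (top_fin_one_not_adj _ _)
      -- kill cases with two inl's among non-adjacent pairs
      all_goals try exact absurd (congrArg inl (Subsingleton.elim a x)) hax
      all_goals try exact absurd (congrArg inl (Subsingleton.elim a y)) hay
      all_goals try exact absurd (congrArg inl (Subsingleton.elim b y)) hby
      -- hub cases
      · -- a = inl
        rintro ⟨h4, -⟩
        rw [Subsingleton.elim a (0 : Fin 1)] at h4
        exact hub x h4.symm
      · -- b = inl
        rintro ⟨-, h4⟩
        rw [Subsingleton.elim b (0 : Fin 1)] at h4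
        exact hub y h4.symm
      · -- x = inl
        rintro ⟨h4, -⟩
        rw [Subsingleton.elim x (0 : Fin 1)] at h4
        exact hub a h4
      · -- y = inl
        rintro ⟨-, h4⟩
        rw [Subsingleton.elim y (0 : Fin 1)] at h4
        exact hub b h4
      · -- all inr
        exact hHs a b x y (graphJoin_adj_inr_inr.mp h1) (graphJoin_adj_inr_inr.mp h2)
          (graphJoin_adj_inr_inr.mp h3) (fun h => hax (congrArg inr h))
          (fun h => hby (congrArg inr h)) (fun h => hay (congrArg inr h))

lemma hub_not_mem (c : Fin 1 ⊕ β → ℕ)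
    (hub : ∀ b, c (inr b) ≠ c (inl 0)) : c (inl 0) ∉ colorsUsed (c ∘ inr) := by
  intro h
  obtain ⟨v, hv⟩ := mem_colorsUsed.mp h
  exact hub v hv

lemma colorsUsed_card_join (c : Fin 1 ⊕ β → ℕ)
    (hub : ∀ b, c (inr b) ≠ c (inl 0)) :
    (colorsUsed c).card = (colorsUsed (c ∘ inr)).card + 1 := by
  classical
  rw [colorsUsed_sum, Finset.card_insert_of_notMem (hub_not_mem c hub)]

lemma step_join_of_step (c : Fin 1 ⊕ β → ℕ) (d' : β → ℕ)
    (hc : IsStarColoring (graphJoin (⊤ : SimpleGraph (Fin 1)) H) c)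
    (h : StarRecolorStep H d' (c ∘ inr)) :
    StarRecolorStep (graphJoin (⊤ : SimpleGraph (Fin 1)) H)
      (Sum.elim (fun _ => c (inl 0)) d') c := by
  classical
  have hub := ((isStarColoring_join_iff c).mp hc).2
  obtain ⟨hcH, hd', i, hi, hkeep, hchg⟩ := h
  have hd'mem : ∀ b, d' b ∈ colorsUsed (c ∘ inr) := by
    intro b
    by_cases hb : (c ∘ inr) b = i
    · exact (hchg b hb).2
    · rw [hkeep b hb]; exact mem_colorsUsed.mpr ⟨b, rfl⟩
  have hine : i ≠ c (inl 0) := by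
    intro hie
    exact hub_not_mem c hub (hie ▸ hi)
  refine ⟨hc, ?_, i, ?_, ?_, ?_⟩
  · rw [isStarColoring_join_iff]
    exact ⟨hd', fun b hb => hub_not_mem c hub
      ((show d' b = c (inl 0) from hb) ▸ hd'mem b)⟩
  · rw [colorsUsed_sum]; exact Finset.mem_insert_of_mem hi
  · rintro (v | v) hv
    · simp only [Sum.elim_inl]; rw [Subsingleton.elim (0 : Fin 1) v]
    · exact hkeep v hv
  · rintro (v | v) hv
    · exfalso
      have h0 : c (inl 0) = i := by rw [Subsingleton.elim (0 : Fin 1) v]; exact hv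
      exact hine h0.symm
    · refine ⟨(hchg v hv).1, ?_⟩
      rw [colorsUsed_sum]
      exact Finset.mem_insert_of_mem (hchg v hv).2

lemma step_of_step_join {c' c : Fin 1 ⊕ β → ℕ}
    (h : StarRecolorStep (graphJoin (⊤ : SimpleGraph (Fin 1)) H) c' c) :
    StarRecolorStep H (c' ∘ inr) (c ∘ inr) := by
  classical
  obtain ⟨hc, hc', i, hi, hkeep, hchg⟩ := h
  have hub := ((isStarColoring_join_iff c).mp hc).2
  have hub' := ((isStarColoring_join_iff c').mp hc').2
  have hine : i ≠ c (inl 0) := by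
    intro hie
    obtain ⟨h1, h2⟩ := hchg (inl 0) hie.symm
    rcases mem_colorsUsed.mp h2 with ⟨v | v, hv⟩
    · rw [Subsingleton.elim v (0 : Fin 1)] at hv
      exact h1 (hv.symm.trans hie.symm)
    · have hvne : c (inr v) ≠ i := fun hh => hub v (hh.trans hie)
      have h5 := hkeep (inr v) hvne
      exact hub' v (h5.trans hv)
  have hiH : i ∈ colorsUsed (c ∘ inr) := by
    rw [colorsUsed_sum] at hi
    rcases Finset.mem_insert.mp hi with h | h
    · exact absurd h hine
    · exact h
  refine ⟨((isStarColoring_join_iff c).mp hc).1, ((isStarColoring_join_iff c').mp hc').1,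
    i, hiH, fun v hv => hkeep (inr v) hv, ?_⟩
  intro v hv
  refine ⟨(hchg (inr v) hv).1, ?_⟩
  have h2 := (hchg (inr v) hv).2
  rw [colorsUsed_sum] at h2
  rcases Finset.mem_insert.mp h2 with h | h
  · have hkeep0 : c' (inl 0) = c (inl 0) := hkeep (inl 0) (fun hh => hine hh.symm)
    exact absurd (h.trans hkeep0.symm) (hub' v)
  · exact h

lemma isStarBColoring_join_iff (c : Fin 1 ⊕ β → ℕ) :
    IsStarBColoring (graphJoin (⊤ : SimpleGraph (Fin 1)) H) c ↔
      IsStarColoring (graphJoin (⊤ : SimpleGraph (Fin 1)) H) c ∧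
        IsStarBColoring H (c ∘ inr) := by
  constructor
  · rintro ⟨h1, h2⟩
    exact ⟨h1, ((isStarColoring_join_iff c).mp h1).1,
      fun d' hd' => h2 _ (step_join_of_step c d' h1 hd')⟩
  · rintro ⟨h1, _, h2⟩
    exact ⟨h1, fun c' hc' => h2 _ (step_of_step_join hc')⟩

/-- Main lemma: adding a universal vertex increases the star b-chromatic number by one. -/
lemma sb_join_one (H : SimpleGraph β) [Fintype β] :
    starBChromaticNumber (graphJoin (⊤ : SimpleGraph (Fin 1)) H) =
      starBChromaticNumber H + 1 := by
  classical
  set S := {n | ∃ c : Fin 1 ⊕ β → ℕ,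
    IsStarBColoring (graphJoin (⊤ : SimpleGraph (Fin 1)) H) c ∧ (colorsUsed c).card = n} with hS
  set T := {n | ∃ c : β → ℕ, IsStarBColoring H c ∧ (colorsUsed c).card = n} with hT
  have hTne : T.Nonempty := by
    obtain ⟨c, hc⟩ := exists_isStarBColoring H
    exact ⟨_, c, hc, rfl⟩
  have hTbdd : BddAbove T := by
    refine ⟨Fintype.card β, ?_⟩
    rintro n ⟨c, _, rfl⟩
    exact colorsUsed_card_le c
  have hSbdd : BddAbove S := by
    refine ⟨Fintype.card (Fin 1 ⊕ β), ?_⟩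
    rintro n ⟨c, _, rfl⟩
    exact colorsUsed_card_le c
  have hST : S = (· + 1) '' T := by
    ext n
    constructor
    · rintro ⟨c, hc, rfl⟩
      have hub := ((isStarColoring_join_iff c).mp hc.1).2
      refine ⟨(colorsUsed (c ∘ inr)).card, ⟨c ∘ inr, ?_, rfl⟩,
        (colorsUsed_card_join c hub).symm⟩
      exact ((isStarBColoring_join_iff c).mp hc).2
    · rintro ⟨t, ⟨d, hd, rfl⟩, rfl⟩
      set N := (colorsUsed d).sup id + 1 with hN
      have hfresh : ∀ b, d b ≠ N := by
        intro b hb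
        have hmem : d b ∈ colorsUsed d := mem_colorsUsed.mpr ⟨b, rfl⟩
        have h2 : d b ≤ (colorsUsed d).sup id := Finset.le_sup (f := id) hmem
        omega
      set c : Fin 1 ⊕ β → ℕ := Sum.elim (fun _ => N) d with hcdef
      have hcinr : c ∘ inr = d := rfl
      have hcol : IsStarColoring (graphJoin (⊤ : SimpleGraph (Fin 1)) H) c := by
        rw [isStarColoring_join_iff]
        exact ⟨hcinr ▸ hd.1, fun b => hfresh b⟩
      refine ⟨c, ?_, ?_⟩
      · rw [isStarBColoring_join_iff]
        exact ⟨hcol, hcinr ▸ hd⟩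
      · rw [colorsUsed_card_join c (fun b => hfresh b), hcinr]
  have hSne : S.Nonempty := by
    obtain ⟨t, ht⟩ := hTne
    exact hST ▸ ⟨t + 1, t, ht, rfl⟩
  show sSup S = sSup T + 1
  apply le_antisymm
  · have h1 : sSup S ∈ (· + 1) '' T := by rw [← hST]; exact Nat.sSup_mem hSne hSbdd
    obtain ⟨t, ht, hte⟩ := h1
    have h3 : t ≤ sSup T := le_csSup hTbdd ht
    have h4 : t + 1 = sSup S := hte
    omega
  · have h2 : sSup T + 1 ∈ S := by rw [hST]; exact ⟨sSup T, Nat.sSup_mem hTne hTbdd, rfl⟩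
    exact le_csSup hSbdd h2

end JoinOne

section Iso

variable {G : SimpleGraph α} {G' : SimpleGraph β}

lemma isStarColoring_map (e : G ≃g G') (c : α → ℕ) (h : IsStarColoring G c) :
    IsStarColoring G' (c ∘ e.symm) := by
  constructor
  · intro u w huw
    exact h.1 (e.symm.map_rel_iff.mpr huw)
  · intro a b x y h1 h2 h3 hax hby hay
    exact h.2 _ _ _ _ (e.symm.map_rel_iff.mpr h1) (e.symm.map_rel_iff.mpr h2)
      (e.symm.map_rel_iff.mpr h3) (fun hh => hax (e.symm.injective hh))
      (fun hh => hby (e.symm.injective hh)) (fun hh => hay (e.symm.injective hh))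

lemma colorsUsed_comp_iso {G1 : SimpleGraph α} {G2 : SimpleGraph β} [Fintype α] [Fintype β]
    (c : α → ℕ) (f : G2 ≃g G1) : colorsUsed (c ∘ ⇑f) = colorsUsed c := by
  classical
  ext j
  simp only [mem_colorsUsed, Function.comp]
  constructor
  · rintro ⟨v, hv⟩; exact ⟨f v, hv⟩
  · rintro ⟨u, hu⟩; exact ⟨f.symm u, by rwa [f.apply_symm_apply]⟩

lemma step_map [Fintype α] [Fintype β] (e : G ≃g G') {c' c : α → ℕ}
    (h : StarRecolorStep G c' c) :
    StarRecolorStep G' (c' ∘ e.symm) (c ∘ e.symm) := by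
  obtain ⟨hc, hc', i, hi, hkeep, hchg⟩ := h
  refine ⟨isStarColoring_map e c hc, isStarColoring_map e c' hc', i, ?_, ?_, ?_⟩
  · rwa [colorsUsed_comp_iso c e.symm]
  · intro v hv
    exact hkeep (e.symm v) hv
  · intro v hv
    refine ⟨(hchg (e.symm v) hv).1, ?_⟩
    rw [colorsUsed_comp_iso c e.symm]
    exact (hchg (e.symm v) hv).2

lemma starB_map [Fintype α] [Fintype β] (e : G ≃g G') {c : α → ℕ}
    (h : IsStarBColoring G c) : IsStarBColoring G' (c ∘ e.symm) := by
  refine ⟨isStarColoring_map e c h.1, ?_⟩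
  intro d' hd'
  have hstep := step_map e.symm hd'
  have hfun : (c ∘ ⇑e.symm) ∘ ⇑e.symm.symm = c := by
    funext v
    simp only [Function.comp_apply]
    rw [show e.symm.symm v = e v from rfl]
    exact congrArg c (e.symm_apply_apply v)
  rw [hfun] at hstep
  exact h.2 _ hstep

lemma sb_iso [Fintype α] [Fintype β] (e : G ≃g G') :
    starBChromaticNumber G = starBChromaticNumber G' := by
  unfold starBChromaticNumber
  congr 1
  ext n
  constructor
  · rintro ⟨c, hc, rfl⟩
    exact ⟨c ∘ e.symm, starB_map e hc, by rw [colorsUsed_comp_iso c e.symm]⟩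
  · rintro ⟨c, hc, rfl⟩
    exact ⟨c ∘ e.symm.symm, starB_map e.symm hc,
      by rw [colorsUsed_comp_iso c e.symm.symm]⟩

end Iso

/-- The star b-chromatic number of the edgeless graph is 1. -/
lemma sb_bot (m : ℕ) (hm : 0 < m) :
    starBChromaticNumber (⊥ : SimpleGraph (Fin m)) = 1 := by
  classical
  have hbotstar : ∀ c : Fin m → ℕ, IsStarColoring (⊥ : SimpleGraph (Fin m)) c := by
    intro c
    exact ⟨fun u w h => absurd h (by simp), fun a b x y h1 => absurd h1 (by simp)⟩
  have hset : {n | ∃ c : Fin m → ℕ, IsStarBColoring (⊥ : SimpleGraph (Fin m)) c ∧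
      (colorsUsed c).card = n} = {1} := by
    ext n
    simp only [Set.mem_setOf_eq, Set.mem_singleton_iff]
    constructor
    · rintro ⟨c, ⟨hc, hmin⟩, rfl⟩
      have hne : (colorsUsed c).Nonempty := ⟨c ⟨0, hm⟩, mem_colorsUsed.mpr ⟨⟨0, hm⟩, rfl⟩⟩
      have h1le : 1 ≤ (colorsUsed c).card := Finset.card_pos.mpr hne
      by_contra hne1
      have h2le : 1 < (colorsUsed c).card := by omega
      obtain ⟨i, hi, j, hj, hij⟩ := Finset.one_lt_card.mp h2le
      refine hmin (fun v => if c v = i then j else c v) ⟨hc, hbotstar _, i, hi, ?_, ?_⟩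
      · intro v hv; simp [hv]
      · intro v hv
        simp only [hv, if_pos]
        exact ⟨fun h => hij h.symm, hj⟩
    · rintro rfl
      refine ⟨fun _ => 0, ⟨hbotstar _, ?_⟩, ?_⟩
      · rintro c' ⟨_, _, i, hi, _, hchg⟩
        have hi0 : i = 0 := by
          obtain ⟨v, hv⟩ := mem_colorsUsed.mp hi
          exact hv.symm
        obtain ⟨h1, h2⟩ := hchg ⟨0, hm⟩ hi0.symm
        obtain ⟨v, hv⟩ := mem_colorsUsed.mp h2
        exact h1 (hv.symm.trans hi0.symm)
      · have : colorsUsed (fun _ : Fin m => 0) = {0} := by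
          ext j
          simp only [mem_colorsUsed, Finset.mem_singleton]
          exact ⟨fun ⟨v, hv⟩ => hv.symm, fun h => ⟨⟨0, hm⟩, h.symm⟩⟩
        rw [this, Finset.card_singleton]
  unfold starBChromaticNumber
  rw [hset, csSup_singleton]

/-- The isomorphism used in the split-graph induction. -/
def splitIso (n m : ℕ) :
    graphJoin (⊤ : SimpleGraph (Fin 1))
        (graphJoin (⊤ : SimpleGraph (Fin (n + 1))) (⊥ : SimpleGraph (Fin m))) ≃g
      graphJoin (⊤ : SimpleGraph (Fin (n + 1 + 1))) (⊥ : SimpleGraph (Fin m)) where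
  toEquiv := (Equiv.sumAssoc (Fin 1) (Fin (n + 1)) (Fin m)).symm.trans
    (Equiv.sumCongr (finSumFinEquiv.trans (finCongr (by omega))) (Equiv.refl (Fin m)))
  map_rel_iff' := by
    rintro (a | (b | d)) (a' | (b' | d')) <;>
      simp [graphJoin_adj_inl_inl, graphJoin_adj_inr_inr, graphJoin_adj_inl_inr,
        graphJoin_adj_inr_inl, Equiv.sumAssoc, Equiv.sumCongr, SimpleGraph.top_adj] <;>
      simp only [Fin.ext_iff, Fin.val_succ, Fin.coe_cast, Fin.coe_castAdd] <;> omega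

lemma sb_split (n m : ℕ) (hm : 0 < m) :
    starBChromaticNumber
        (graphJoin (⊤ : SimpleGraph (Fin (n + 1))) (⊥ : SimpleGraph (Fin m))) = n + 2 := by
  induction n with
  | zero => rw [sb_join_one, sb_bot m hm]
  | succ n ih =>
      rw [← sb_iso (splitIso n m), sb_join_one, ih]

end Aux

/-- **Corollary (wheels, fans and complete split graphs).** For integers `k, l ≥ 4` and
positive integers `n, m`: the wheel `W_k = K₁ ∨ C_{k-1}` satisfies
`Sᵦ(W_k) = Sᵦ(C_{k-1}) + 1`; the fan `F_l = K₁ ∨ P_{l-1}` satisfies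
`Sᵦ(F_l) = Sᵦ(P_{l-1}) + 1`; and the complete split graph `Kₙ ∨ K̄ₘ` satisfies
`Sᵦ(Kₙ ∨ K̄ₘ) = n + 1`. -/
theorem starBChromaticNumber_wheel_fan_split (k l n m : ℕ) (hk : 4 ≤ k) (hl : 4 ≤ l)
    (hn : 0 < n) (hm : 0 < m) :
    starBChromaticNumber
        (graphJoin (⊤ : SimpleGraph (Fin 1)) (SimpleGraph.cycleGraph (k - 1))) =
      starBChromaticNumber (SimpleGraph.cycleGraph (k - 1)) + 1 ∧
    starBChromaticNumber
        (graphJoin (⊤ : SimpleGraph (Fin 1)) (SimpleGraph.pathGraph (l - 1))) =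
      starBChromaticNumber (SimpleGraph.pathGraph (l - 1)) + 1 ∧
    starBChromaticNumber (graphJoin (⊤ : SimpleGraph (Fin n)) (⊥ : SimpleGraph (Fin m))) =
      n + 1 := by
  refine ⟨sb_join_one _, sb_join_one _, ?_⟩
  obtain ⟨n', rfl⟩ : ∃ n', n = n' + 1 := ⟨n - 1, by omega⟩
  exact sb_split n' m hm
end

section
/- For every natural number M there exists a finite simple graph G with S_b(G) − φ(G) > M, where φ(G) is the b-chromatic number; in fact, the complete bipartite graph K_{n,n} satisfies φ(K_{n,n}) = 2 and S_b(K_{n,n}) = n + 1 for every n ≥ 1, so the difference S_b(G) − φ(G) is unbounded. -/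
/-!
Definitions for star colorings, star recoloring steps, the strict partial order `≺ₛ`,
star b-vertices, the star (b-)chromatic number, star degrees and related notions,
following Božović, Mesarič Štesl, Peterin,
"On star b-chromatic number of a graph".
-/

variable {V : Type*}

set_option linter.unusedSectionVars false

section StarBAux

variable {n : ℕ} {V : Type*} [Fintype V] [DecidableEq V]

lemma mem_colorsUsed_iff {c : V → ℕ} {j : ℕ} : j ∈ colorsUsed c ↔ ∃ v, c v = j := by
  simp [colorsUsed]

/-- Side `b` (as the `isLeft` value under `e`) has a repeated color. -/
def HasRep (e : V ≃ (Fin n ⊕ Fin n)) (c : V → ℕ) (b : Bool) : Prop :=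
  ∃ u v, (e u).isLeft = b ∧ (e v).isLeft = b ∧ u ≠ v ∧ c u = c v

lemma star_iff (e : V ≃ (Fin n ⊕ Fin n)) {G : SimpleGraph V}
    (hadj : ∀ u v, G.Adj u v ↔ (e u).isLeft ≠ (e v).isLeft) (c : V → ℕ) :
    IsStarColoring G c ↔
      (∀ ⦃u w⦄, G.Adj u w → c u ≠ c w) ∧ ¬(HasRep e c true ∧ HasRep e c false) := by
  constructor
  · rintro ⟨h1, h2⟩
    refine ⟨h1, ?_⟩
    rintro ⟨⟨u, v, hu, hv, huv, hcuv⟩, ⟨p, q, hp, hq, hpq, hcpq⟩⟩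
    have hup : G.Adj u p := (hadj u p).2 (by rw [hu, hp]; simp)
    have hpv : G.Adj p v := (hadj p v).2 (by rw [hp, hv]; simp)
    have hvq : G.Adj v q := (hadj v q).2 (by rw [hv, hq]; simp)
    have huq : u ≠ q := by rintro rfl; rw [hu] at hq; cases hq
    exact h2 u p v q hup hpv hvq huv hpq huq ⟨hcuv, hcpq⟩
  · rintro ⟨h1, h2⟩
    refine ⟨h1, ?_⟩
    intro a b x y hab hbx hxy hax hby _ hc
    apply h2
    have sab := (hadj a b).1 hab
    have sbx := (hadj b x).1 hbx
    have sxy := (hadj x y).1 hxy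
    have hxa : (e x).isLeft = (e a).isLeft := by
      cases h1 : (e a).isLeft <;> cases h2 : (e b).isLeft <;> cases h3 : (e x).isLeft <;>
        simp_all
    have hyb : (e y).isLeft = (e b).isLeft := by
      cases h1 : (e b).isLeft <;> cases h2 : (e x).isLeft <;> cases h3 : (e y).isLeft <;>
        simp_all
    cases ha : (e a).isLeft
    · have hb : (e b).isLeft = true := by
        cases h : (e b).isLeft; · rw [ha, h] at sab; cases sab rfl
        · rfl
      exact ⟨⟨b, y, hb, hyb.trans hb, hby, hc.2⟩, ⟨a, x, ha, hxa.trans ha, hax, hc.1⟩⟩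
    · have hb : (e b).isLeft = false := by
        cases h : (e b).isLeft; · rfl
        · rw [ha, h] at sab; cases sab rfl
      exact ⟨⟨a, x, ha, hxa.trans ha, hax, hc.1⟩, ⟨b, y, hb, hyb.trans hb, hby, hc.2⟩⟩

lemma colorsUsed_eq_union (e : V ≃ (Fin n ⊕ Fin n)) (c : V → ℕ) :
    colorsUsed c =
      Finset.image (fun a : Fin n => c (e.symm (Sum.inl a))) Finset.univ ∪
      Finset.image (fun a : Fin n => c (e.symm (Sum.inr a))) Finset.univ := by
  ext j
  simp only [mem_colorsUsed_iff, Finset.mem_union, Finset.mem_image, Finset.mem_univ,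
    true_and]
  constructor
  · rintro ⟨v, rfl⟩
    rcases h : e v with a | a
    · exact Or.inl ⟨a, by rw [← h, e.symm_apply_apply]⟩
    · exact Or.inr ⟨a, by rw [← h, e.symm_apply_apply]⟩
  · rintro (⟨a, rfl⟩ | ⟨a, rfl⟩) <;> exact ⟨_, rfl⟩

end StarBAux

section StarBAux2
variable {n : ℕ} {V : Type*} [Fintype V] [DecidableEq V]

lemma b_upper_core (e : V ≃ (Fin n ⊕ Fin n)) {G : SimpleGraph V}
    (hadj : ∀ u v, G.Adj u v ↔ (e u).isLeft ≠ (e v).isLeft) {c : V → ℕ}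
    (hp : ∀ ⦃u w⦄, G.Adj u w → c u ≠ c w)
    (hb : ∀ i ∈ colorsUsed c, ∃ v, c v = i ∧
      ∀ j ∈ colorsUsed c, ∃ u, (u = v ∨ G.Adj v u) ∧ c u = j)
    (h2 : ∃ a b : Fin n, c (e.symm (Sum.inl a)) ≠ c (e.symm (Sum.inl b))) : False := by
  have hcross : ∀ u w : V, (e u).isLeft ≠ (e w).isLeft → c u ≠ c w :=
    fun u w h => hp ((hadj u w).2 h)
  obtain ⟨a, b, hab⟩ := h2
  obtain ⟨v, hv, hmv⟩ := hb (c (e.symm (Sum.inl a))) (mem_colorsUsed_iff.2 ⟨_, rfl⟩)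
  have hside : (e v).isLeft = true := by
    by_contra h
    exact hcross v (e.symm (Sum.inl a)) (by simp only [Equiv.apply_symm_apply]; simpa using h) hv
  obtain ⟨u, hu, hcu⟩ := hmv (c (e.symm (Sum.inl b))) (mem_colorsUsed_iff.2 ⟨_, rfl⟩)
  rcases hu with rfl | hadjvu
  · exact hab (hv ▸ hcu ▸ rfl)
  · have hus : (e u).isLeft = false := by
      have := (hadj v u).1 hadjvu
      rw [hside] at this
      cases h : (e u).isLeft
      · rfl
      · exact absurd h.symm this
    exact hcross u (e.symm (Sum.inl b))
      (by simp only [Equiv.apply_symm_apply, hus]; simp) hcu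

lemma hadj_swap (e : V ≃ (Fin n ⊕ Fin n)) {G : SimpleGraph V}
    (hadj : ∀ u v, G.Adj u v ↔ (e u).isLeft ≠ (e v).isLeft) :
    ∀ u v, G.Adj u v ↔
      ((e.trans (Equiv.sumComm (Fin n) (Fin n))) u).isLeft ≠
      ((e.trans (Equiv.sumComm (Fin n) (Fin n))) v).isLeft := by
  intro u v
  rw [hadj]
  simp only [Equiv.trans_apply, Equiv.sumComm_apply]
  rcases h : e u with a | a <;> rcases h' : e v with b | b <;> simp

lemma bChrom_eq (hn : 1 ≤ n) (e : V ≃ (Fin n ⊕ Fin n)) {G : SimpleGraph V}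
    (hadj : ∀ u v, G.Adj u v ↔ (e u).isLeft ≠ (e v).isLeft) :
    bChromaticNumber G = 2 := by
  set vL := e.symm (Sum.inl ⟨0, hn⟩) with hvLdef
  set vR := e.symm (Sum.inr ⟨0, hn⟩) with hvRdef
  set c2 : V → ℕ := fun v => if (e v).isLeft then 1 else 0 with hc2
  have hvL : (e vL).isLeft = true := by rw [hvLdef]; simp
  have hvR : (e vR).isLeft = false := by rw [hvRdef]; simp
  have hcL : c2 vL = 1 := by rw [hc2]; simp [hvL]
  have hcR : c2 vR = 0 := by rw [hc2]; simp [hvR]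
  have hused : colorsUsed c2 = {0, 1} := by
    ext j
    simp only [mem_colorsUsed_iff, Finset.mem_insert, Finset.mem_singleton]
    constructor
    · rintro ⟨v, rfl⟩
      by_cases h : (e v).isLeft <;> simp [hc2, h]
    · rintro (rfl | rfl)
      exacts [⟨vR, hcR⟩, ⟨vL, hcL⟩]
  have hproper : ∀ ⦃u w⦄, G.Adj u w → c2 u ≠ c2 w := by
    intro u w h
    have hs := (hadj u w).1 h
    rw [hc2]
    cases h1 : (e u).isLeft <;> cases h2 : (e w).isLeft <;>
      first
      | (exfalso; rw [h1, h2] at hs; exact hs rfl)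
      | simp [h1, h2]
  have hmem : 2 ∈ {k | ∃ c : V → ℕ, (∀ ⦃u w⦄, G.Adj u w → c u ≠ c w) ∧
      (colorsUsed c).card = k ∧ ∀ i ∈ colorsUsed c, ∃ v, c v = i ∧
      ∀ j ∈ colorsUsed c, ∃ u, (u = v ∨ G.Adj v u) ∧ c u = j} := by
    refine ⟨c2, hproper, by rw [hused]; rfl, ?_⟩
    intro i hi
    rw [hused] at hi
    have hadjLR : G.Adj vL vR := (hadj vL vR).2 (by rw [hvL, hvR]; simp)
    have hadjRL : G.Adj vR vL := (hadj vR vL).2 (by rw [hvL, hvR]; simp)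
    simp only [Finset.mem_insert, Finset.mem_singleton] at hi
    rcases hi with rfl | rfl
    · refine ⟨vR, hcR, ?_⟩
      intro j hj
      rw [hused] at hj
      simp only [Finset.mem_insert, Finset.mem_singleton] at hj
      rcases hj with rfl | rfl
      · exact ⟨vR, Or.inl rfl, hcR⟩
      · exact ⟨vL, Or.inr hadjRL, hcL⟩
    · refine ⟨vL, hcL, ?_⟩
      intro j hj
      rw [hused] at hj
      simp only [Finset.mem_insert, Finset.mem_singleton] at hj
      rcases hj with rfl | rfl
      · exact ⟨vR, Or.inr hadjLR, hcR⟩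
      · exact ⟨vL, Or.inl rfl, hcL⟩
  have hub : ∀ k ∈ {k | ∃ c : V → ℕ, (∀ ⦃u w⦄, G.Adj u w → c u ≠ c w) ∧
      (colorsUsed c).card = k ∧ ∀ i ∈ colorsUsed c, ∃ v, c v = i ∧
      ∀ j ∈ colorsUsed c, ∃ u, (u = v ∨ G.Adj v u) ∧ c u = j}, k ≤ 2 := by
    rintro k ⟨c, hp, hcard, hb⟩
    by_contra hk
    push_neg at hk
    -- some side has two distinct colors
    have hunion := colorsUsed_eq_union e c
    set L := Finset.image (fun a : Fin n => c (e.symm (Sum.inl a))) Finset.univ with hL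
    set R := Finset.image (fun a : Fin n => c (e.symm (Sum.inr a))) Finset.univ with hR
    have : 2 ≤ L.card ∨ 2 ≤ R.card := by
      by_contra h
      push_neg at h
      have := Finset.card_union_le L R
      rw [hunion] at hcard
      omega
    have hsymmtr : ∀ a : Fin n,
        (e.trans (Equiv.sumComm (Fin n) (Fin n))).symm (Sum.inl a) = e.symm (Sum.inr a) :=
      fun a => by simp
    rcases this with h2 | h2
    · obtain ⟨x, hx, y, hy, hxy⟩ := Finset.one_lt_card.1 h2
      rw [hL] at hx hy
      simp only [Finset.mem_image, Finset.mem_univ, true_and] at hx hy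
      obtain ⟨a, rfl⟩ := hx
      obtain ⟨b, rfl⟩ := hy
      exact b_upper_core e hadj hp hb ⟨a, b, hxy⟩
    · obtain ⟨x, hx, y, hy, hxy⟩ := Finset.one_lt_card.1 h2
      rw [hR] at hx hy
      simp only [Finset.mem_image, Finset.mem_univ, true_and] at hx hy
      obtain ⟨a, rfl⟩ := hx
      obtain ⟨b, rfl⟩ := hy
      exact b_upper_core (e.trans (Equiv.sumComm (Fin n) (Fin n))) (hadj_swap e hadj) hp hb
        ⟨a, b, by rw [hsymmtr, hsymmtr]; exact hxy⟩
  exact le_antisymm (csSup_le ⟨2, hmem⟩ hub) (le_csSup ⟨2, hub⟩ hmem)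
end StarBAux2

section StarBAux3
variable {n : ℕ} {V : Type*} [Fintype V] [DecidableEq V]

lemma hasRep_swap (e : V ≃ (Fin n ⊕ Fin n)) (c : V → ℕ) (b : Bool) :
    HasRep (e.trans (Equiv.sumComm (Fin n) (Fin n))) c b ↔ HasRep e c (!b) := by
  have key : ∀ v : V, ((e.trans (Equiv.sumComm (Fin n) (Fin n))) v).isLeft = !(e v).isLeft := by
    intro v
    simp only [Equiv.trans_apply, Equiv.sumComm_apply]
    rcases e v with a | a <;> simp
  constructor <;> rintro ⟨u, v, hu, hv, h1, h2⟩
  · refine ⟨u, v, ?_, ?_, h1, h2⟩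
    · rw [key] at hu; cases hb : (e u).isLeft <;> rw [hb] at hu <;> simp [← hu]
    · rw [key] at hv; cases hb : (e v).isLeft <;> rw [hb] at hv <;> simp [← hv]
  · refine ⟨u, v, ?_, ?_, h1, h2⟩
    · rw [key, hu]; simp
    · rw [key, hv]; simp

/-- Core recoloring lemma: if the `inr`-side has no repeated color and the coloring uses
at least `n+2` colors, a star recoloring step is possible. -/
lemma recolor_exists (e : V ≃ (Fin n ⊕ Fin n)) {G : SimpleGraph V}
    (hadj : ∀ u v, G.Adj u v ↔ (e u).isLeft ≠ (e v).isLeft) {c : V → ℕ}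
    (hc : IsStarColoring G c) (hcard : n + 2 ≤ (colorsUsed c).card)
    (hnr : ¬ HasRep e c false) :
    ∃ c', StarRecolorStep G c' c := by
  obtain ⟨hp, -⟩ := (star_iff e hadj c).1 hc
  have hcross : ∀ u w : V, (e u).isLeft ≠ (e w).isLeft → c u ≠ c w :=
    fun u w h => hp ((hadj u w).2 h)
  -- the inl-side carries at least two colors
  have hunion := colorsUsed_eq_union e c
  set L := Finset.image (fun a : Fin n => c (e.symm (Sum.inl a))) Finset.univ with hL
  set R := Finset.image (fun a : Fin n => c (e.symm (Sum.inr a))) Finset.univ with hR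
  have hRcard : R.card ≤ n := by
    calc R.card ≤ Finset.univ.card := Finset.card_image_le
    _ = n := by simp
  have hLcard : 2 ≤ L.card := by
    have h1 := Finset.card_union_le L R
    rw [hunion] at hcard
    omega
  obtain ⟨i, hi, j, hj, hij⟩ := Finset.one_lt_card.1 hLcard
  rw [hL] at hi hj
  simp only [Finset.mem_image, Finset.mem_univ, true_and] at hi hj
  obtain ⟨a, ha⟩ := hi
  obtain ⟨b, hb⟩ := hj
  have hsa : (e (e.symm (Sum.inl a))).isLeft = true := by simp
  have hsb : (e (e.symm (Sum.inl b))).isLeft = true := by simp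
  -- vertices colored `i` live on the inl side
  have hside : ∀ v, c v = i → (e v).isLeft = true := by
    intro v hv
    by_contra h
    exact hcross v (e.symm (Sum.inl a)) (by rw [hsa]; simpa using h) (hv.trans ha.symm)
  set c' : V → ℕ := fun v => if c v = i then j else c v with hc'def
  have hc'j : ∀ v, c v = i → c' v = j := fun v hv => by rw [hc'def]; simp [hv]
  have hc'keep : ∀ v, c v ≠ i → c' v = c v := fun v hv => by rw [hc'def]; simp [hv]
  have hsame : ∀ v, ∃ v', (e v').isLeft = (e v).isLeft ∧ c v' = c' v := by
    intro v
    by_cases h : c v = i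
    · exact ⟨e.symm (Sum.inl b), by rw [hsb, hside v h], hb.trans (hc'j v h).symm⟩
    · exact ⟨v, rfl, (hc'keep v h).symm⟩
  have hstar' : IsStarColoring G c' := by
    rw [star_iff e hadj]
    constructor
    · intro u w huw heq
      obtain ⟨u', hu1, hu2⟩ := hsame u
      obtain ⟨w', hw1, hw2⟩ := hsame w
      have hs := (hadj u w).1 huw
      exact hcross u' w' (by rw [hu1, hw1]; exact hs) (by rw [hu2, hw2, heq])
    · rintro ⟨-, u, v, hu, hv, huv, hcc⟩
      have hcu : c u ≠ i := fun h => by rw [hside u h] at hu; cases hu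
      have hcv : c v ≠ i := fun h => by rw [hside v h] at hv; cases hv
      exact hnr ⟨u, v, hu, hv, huv, by rw [← hc'keep u hcu, ← hc'keep v hcv]; exact hcc⟩
  refine ⟨c', hc, hstar', i, mem_colorsUsed_iff.2 ⟨_, ha⟩, hc'keep, ?_⟩
  intro v hv
  exact ⟨by rw [hc'j v hv]; exact fun h => hij h.symm,
    mem_colorsUsed_iff.2 ⟨_, hb.trans (hc'j v hv).symm⟩⟩

end StarBAux3

section StarBAux4
variable {n : ℕ} {V : Type*} [Fintype V] [DecidableEq V]

lemma starB_eq (hn : 1 ≤ n) (e : V ≃ (Fin n ⊕ Fin n)) {G : SimpleGraph V}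
    (hadj : ∀ u v, G.Adj u v ↔ (e u).isLeft ≠ (e v).isLeft) :
    starBChromaticNumber G = n + 1 := by
  set cs : V → ℕ := fun v => Sum.elim Fin.val (fun _ => n) (e v) with hcs
  have hcsL : ∀ a : Fin n, cs (e.symm (Sum.inl a)) = a := by intro a; rw [hcs]; simp
  have hcsR : ∀ a : Fin n, cs (e.symm (Sum.inr a)) = n := by intro a; rw [hcs]; simp
  have hused : colorsUsed cs = Finset.range (n + 1) := by
    ext j
    simp only [mem_colorsUsed_iff, Finset.mem_range]
    constructor
    · rintro ⟨v, rfl⟩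
      rcases h : e v with a | a <;> rw [hcs] <;> simp only [h, Sum.elim_inl, Sum.elim_inr]
      · omega
      · omega
    · intro hj
      rcases Nat.lt_or_ge j n with h | h
      · exact ⟨e.symm (Sum.inl ⟨j, h⟩), hcsL _⟩
      · have : j = n := by omega
        exact ⟨e.symm (Sum.inr ⟨0, hn⟩), (hcsR _).trans this.symm⟩
  have hvalL : ∀ v, (e v).isLeft = true → cs v < n := by
    intro v hv
    obtain ⟨a, ha⟩ := Sum.isLeft_iff.1 hv
    rw [hcs]; simp only [ha, Sum.elim_inl]; exact a.isLt
  have hvalR : ∀ v, (e v).isLeft = false → cs v = n := by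
    intro v hv
    rcases h : e v with a | a
    · rw [h] at hv; cases hv
    · rw [hcs]; simp [h]
  have hstar : IsStarColoring G cs := by
    rw [star_iff e hadj]
    constructor
    · intro u w huw
      have hs := (hadj u w).1 huw
      cases h1 : (e u).isLeft <;> cases h2 : (e w).isLeft
      · rw [h1, h2] at hs; cases hs rfl
      · have := hvalR u h1; have := hvalL w h2; omega
      · have := hvalL u h1; have := hvalR w h2; omega
      · rw [h1, h2] at hs; cases hs rfl
    · rintro ⟨⟨u, v, hu, hv, huv, hcc⟩, -⟩
      obtain ⟨a, ha⟩ := Sum.isLeft_iff.1 hu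
      obtain ⟨b, hb⟩ := Sum.isLeft_iff.1 hv
      rw [hcs] at hcc
      simp only [ha, hb, Sum.elim_inl] at hcc
      have : (a : Fin n) = b := Fin.ext hcc
      exact huv (e.injective (by rw [ha, hb, this]))
  -- `cs` admits no star recoloring step
  have hmin : ∀ c', ¬ StarRecolorStep G c' cs := by
    rintro c' ⟨-, hc', i, hi, hkeep, hmove⟩
    obtain ⟨hp', hrep'⟩ := (star_iff e hadj c').1 hc'
    rw [hused, Finset.mem_range] at hi
    set r0 : V := e.symm (Sum.inr ⟨0, hn⟩) with hr0
    have hrs : (e r0).isLeft = false := by rw [hr0]; simp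
    rcases Nat.lt_or_ge i n with hin | hin
    · -- i is a left color
      set v0 : V := e.symm (Sum.inl ⟨i, hin⟩) with hv0
      have hv0c : cs v0 = i := hcsL _
      obtain ⟨hne, hmem⟩ := hmove v0 hv0c
      rw [hused, Finset.mem_range] at hmem
      rcases Nat.lt_or_ge (c' v0) n with hlt | hge
      · -- recolored to another left color j
        have hjn : c' v0 ≠ i := hne
        set w : V := e.symm (Sum.inl ⟨c' v0, hlt⟩) with hw
        have hwc : cs w = c' v0 := hcsL _
        have hwne : cs w ≠ i := by rw [hwc]; exact hne
        have hc'w : c' w = c' v0 := by rw [hkeep w hwne, hwc]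
        have hn2 : 2 ≤ n := by omega
        set r1 : V := e.symm (Sum.inr ⟨1, hn2⟩) with hr1
        have hr1s : (e r1).isLeft = false := by rw [hr1]; simp
        have hr0c : c' r0 = n := by
          rw [hkeep r0 (by rw [hcsR]; omega)]; exact hcsR _
        have hr1c : c' r1 = n := by
          rw [hkeep r1 (by rw [hcsR]; omega)]; exact hcsR _
        apply hrep'
        constructor
        · refine ⟨v0, w, by rw [hv0]; simp, by rw [hw]; simp, ?_, hc'w.symm⟩
          intro h
          rw [h, hwc] at hv0c
          exact hne hv0c
        · refine ⟨r0, r1, hrs, hr1s, ?_, by rw [hr0c, hr1c]⟩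
          intro h
          rw [hr0, hr1] at h
          have := e.symm.injective h
          simpa using this
      · -- recolored to the right color n
        have hc'v0 : c' v0 = n := by omega
        have hr0c : c' r0 = n := by rw [hkeep r0 (by rw [hcsR]; omega)]; exact hcsR _
        have hadjvr : G.Adj v0 r0 := (hadj v0 r0).2 (by rw [hrs, hv0]; simp)
        exact hp' hadjvr (by rw [hc'v0, hr0c])
    · -- i = n : the right color
      have hieq : i = n := by omega
      have hr0m := hmove r0 (by rw [hcsR, hieq])
      obtain ⟨hne, hmem⟩ := hr0m
      rw [hused, Finset.mem_range] at hmem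
      have hlt : c' r0 < n := by omega
      set w : V := e.symm (Sum.inl ⟨c' r0, hlt⟩) with hw
      have hwc : cs w = c' r0 := hcsL _
      have hwne : cs w ≠ i := by rw [hwc]; omega
      have hc'w : c' w = c' r0 := by rw [hkeep w hwne, hwc]
      have hadjwr : G.Adj w r0 := (hadj w r0).2 (by rw [hrs, hw]; simp)
      exact hp' hadjwr hc'w
  have hmem : n + 1 ∈ {m | ∃ c : V → ℕ, IsStarBColoring G c ∧ (colorsUsed c).card = m} :=
    ⟨cs, ⟨hstar, hmin⟩, by rw [hused, Finset.card_range]⟩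
  have hub : ∀ m ∈ {m | ∃ c : V → ℕ, IsStarBColoring G c ∧ (colorsUsed c).card = m},
      m ≤ n + 1 := by
    rintro m ⟨c, ⟨hcstar, hcmin⟩, hcard⟩
    by_contra hm
    push_neg at hm
    have hcard2 : n + 2 ≤ (colorsUsed c).card := by omega
    obtain ⟨-, hnotboth⟩ := (star_iff e hadj c).1 hcstar
    rcases not_and_or.1 hnotboth with hnr | hnr
    · -- true side rainbow: swap sides
      obtain ⟨c', hstep⟩ := recolor_exists (e.trans (Equiv.sumComm (Fin n) (Fin n)))
        (hadj_swap e hadj) hcstar hcard2 (by rw [hasRep_swap]; exact hnr)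
      exact hcmin c' hstep
    · obtain ⟨c', hstep⟩ := recolor_exists e hadj hcstar hcard2 hnr
      exact hcmin c' hstep
  exact le_antisymm (csSup_le ⟨n + 1, hmem⟩ hub) (le_csSup ⟨n + 1, hub⟩ hmem)

end StarBAux4


/-- **Corollary.** The difference `Sᵦ(G) − φ(G)` between the star b-chromatic number and
the b-chromatic number is unbounded: the complete bipartite graph `K_{n,n}` satisfies
`φ(K_{n,n}) = 2` and `Sᵦ(K_{n,n}) = n + 1` for every `n ≥ 1`, and hence for every natural
number `M` there is a finite simple graph `G` with `Sᵦ(G) − φ(G) > M`. -/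
theorem starB_sub_bChromatic_unbounded :
    (∀ n : ℕ, 1 ≤ n →
      bChromaticNumber (completeBipartiteGraph (Fin n) (Fin n)) = 2 ∧
      starBChromaticNumber (completeBipartiteGraph (Fin n) (Fin n)) = n + 1) ∧
    ∀ M : ℕ, ∃ (m : ℕ) (G : SimpleGraph (Fin m)),
      bChromaticNumber G + M < starBChromaticNumber G := by
  constructor
  · intro n hn
    have hadj : ∀ u v : Fin n ⊕ Fin n,
        (completeBipartiteGraph (Fin n) (Fin n)).Adj u v ↔
          ((Equiv.refl (Fin n ⊕ Fin n)) u).isLeft ≠ ((Equiv.refl (Fin n ⊕ Fin n)) v).isLeft := by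
      rintro (a | a) (b | b) <;> simp
    exact ⟨bChrom_eq hn (Equiv.refl _) hadj, starB_eq hn (Equiv.refl _) hadj⟩
  · intro M
    set n := M + 2 with hn
    set e : Fin (2 * n) ≃ (Fin n ⊕ Fin n) := (finCongr (two_mul n)).trans finSumFinEquiv.symm
      with he
    refine ⟨2 * n, SimpleGraph.comap (⇑e) (completeBipartiteGraph (Fin n) (Fin n)), ?_⟩
    have hadj : ∀ u v : Fin (2 * n),
        (SimpleGraph.comap (⇑e) (completeBipartiteGraph (Fin n) (Fin n))).Adj u v ↔
          (e u).isLeft ≠ (e v).isLeft := by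
      intro u v
      show (completeBipartiteGraph (Fin n) (Fin n)).Adj (e u) (e v) ↔ _
      rcases e u with a | a <;> rcases e v with b | b <;> simp
    rw [(bChrom_eq (by omega) e hadj : _ = 2), (starB_eq (by omega) e hadj : _ = n + 1)]
    omega
end
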